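/- Let C be a compact subset of ℝ^n, I = [α, ∞), and f : I × C → ℝ be such that f(·, π) is nonincreasing and continuous for every π ∈ C and f(ρ, ·) is continuous for every ρ ∈ I. Then lim_{ρ→∞} max_{π∈C} f(ρ, π) = max_{π∈C} lim_{ρ→∞} f(ρ, π). In particular, the maximum on the right-hand side is attained. -/

import Mathlib

open Filter

/-- Minimax lemma: for `C ⊆ ℝⁿ` compact (nonempty) and `f : [α,∞) × C → ℝ` nonincreasing
and continuous in the first argument and continuous in the second,
`lim_{ρ→∞} max_{π∈C} f(ρ,π) = max_{π∈C} lim_{ρ→∞} f(ρ,π)` (limits taken in `EReal`,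
where by monotonicity `lim_{ρ→∞} f(ρ,π) = ⨅_{ρ≥α} f(ρ,π)`), and the maximum on the
right-hand side is attained. -/
theorem minimax_limit_max_eq_max_limit (n : ℕ) (C : Set (Fin n → ℝ)) (α : ℝ)
    (f : ℝ → (Fin n → ℝ) → ℝ)
    (hC : IsCompact C) (hne : C.Nonempty)
    (hmono : ∀ π ∈ C, ∀ ρ₁ ρ₂, α ≤ ρ₁ → ρ₁ ≤ ρ₂ → f ρ₂ π ≤ f ρ₁ π)
    (hcont₁ : ∀ π ∈ C, ContinuousOn (fun ρ => f ρ π) (Set.Ici α))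
    (hcont₂ : ∀ ρ, α ≤ ρ → ContinuousOn (fun π => f ρ π) C) :
    Tendsto (fun ρ : ℝ => ⨆ π ∈ C, ((f ρ π : ℝ) : EReal)) atTop
        (nhds (⨆ π ∈ C, ⨅ ρ : Set.Ici α, ((f (ρ : ℝ) π : ℝ) : EReal))) ∧
      ∃ π₀ ∈ C, (⨅ ρ : Set.Ici α, ((f (ρ : ℝ) π₀ : ℝ) : EReal)) =
        ⨆ π ∈ C, ⨅ ρ : Set.Ici α, ((f (ρ : ℝ) π : ℝ) : EReal) := by
  classical
  set F : (Fin n → ℝ) → EReal := fun π => ⨅ ρ : Set.Ici α, ((f (ρ : ℝ) π : ℝ) : EReal) with hF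
  set G : ℝ → EReal := fun ρ => ⨆ π ∈ C, ((f ρ π : ℝ) : EReal) with hG
  set L : EReal := ⨆ π ∈ C, F π with hL
  set A : EReal := ⨅ ρ : Set.Ici α, G (ρ : ℝ) with hA
  have hαk : ∀ k : ℕ, α ≤ α + k := fun k => le_add_of_nonneg_right (Nat.cast_nonneg k)
  have hmaxx : ∀ k : ℕ, ∃ π ∈ C, ∀ π' ∈ C, f (α + k) π' ≤ f (α + k) π := by
    intro k
    obtain ⟨π, hπ, hm⟩ := hC.exists_isMaxOn hne (hcont₂ (α + k) (hαk k))
    exact ⟨π, hπ, fun π' hπ' => hm hπ'⟩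
  choose p hpC hpmax using hmaxx
  obtain ⟨π₀, hπ₀C, φ, hφ, hφt⟩ := hC.tendsto_subseq hpC
  have hGk : ∀ k : ℕ, G (α + k) = ((f (α + k) (p k) : ℝ) : EReal) := by
    intro k
    refine le_antisymm (iSup₂_le fun π hπ => EReal.coe_le_coe_iff.mpr (hpmax k π hπ)) ?_
    exact le_iSup₂ (f := fun π (_ : π ∈ C) => ((f (α + k) π : ℝ) : EReal)) (p k) (hpC k)
  have hLA : L ≤ A := le_iInf fun ⟨ρ, hρ⟩ => iSup₂_le fun π hπ =>
    le_trans (iInf_le _ (⟨ρ, hρ⟩ : Set.Ici α))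
      (le_iSup₂ (f := fun π (_ : π ∈ C) => ((f ρ π : ℝ) : EReal)) π hπ)
  have hAF : A ≤ F π₀ := by
    refine le_iInf fun ⟨ρ, hρ⟩ => ?_
    have h1 : Tendsto (fun j => p (φ j)) atTop (nhdsWithin π₀ C) :=
      tendsto_nhdsWithin_of_tendsto_nhds_of_eventually_within _ hφt
        (Eventually.of_forall fun j => hpC (φ j))
    have h2 : Tendsto (fun j => ((f ρ (p (φ j)) : ℝ) : EReal)) atTop
        (nhds ((f ρ π₀ : ℝ) : EReal)) :=
      (continuous_coe_real_ereal.tendsto _).comp (((hcont₂ ρ hρ) π₀ hπ₀C).tendsto.comp h1)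
    refine ge_of_tendsto h2 ?_
    filter_upwards [eventually_ge_atTop ⌈ρ - α⌉₊] with j hj
    have hjφ : (j : ℝ) ≤ (φ j : ℝ) := by exact_mod_cast hφ.le_apply
    have hρj : ρ ≤ α + (φ j : ℝ) := by
      have := Nat.le_of_ceil_le hj
      linarith [this, hjφ]
    calc A ≤ G (α + (φ j : ℝ)) := iInf_le _ (⟨α + (φ j : ℝ), hαk (φ j)⟩ : Set.Ici α)
      _ = ((f (α + (φ j : ℝ)) (p (φ j)) : ℝ) : EReal) := hGk (φ j)
      _ ≤ ((f ρ (p (φ j)) : ℝ) : EReal) :=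
          EReal.coe_le_coe_iff.mpr (hmono _ (hpC (φ j)) ρ _ hρ hρj)
  have hFL : F π₀ ≤ L := le_iSup₂ (f := fun π (_ : π ∈ C) => F π) π₀ hπ₀C
  have hAL : A = L := le_antisymm (hAF.trans hFL) hLA
  constructor
  · -- Tendsto G atTop (nhds L)
    have hGanti : ∀ r₁ r₂, α ≤ r₁ → r₁ ≤ r₂ → G r₂ ≤ G r₁ := fun r₁ r₂ h1 h12 =>
      iSup₂_le fun π hπ => le_trans (EReal.coe_le_coe_iff.mpr (hmono π hπ r₁ r₂ h1 h12))
        (le_iSup₂ (f := fun π (_ : π ∈ C) => ((f r₁ π : ℝ) : EReal)) π hπ)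
    have hG'anti : Antitone (fun ρ => G (max ρ α)) := fun r₁ r₂ h =>
      hGanti _ _ (le_max_right _ _) (max_le_max h le_rfl)
    have ht : Tendsto (fun ρ => G (max ρ α)) atTop (nhds (⨅ ρ : ℝ, G (max ρ α))) :=
      tendsto_atTop_iInf hG'anti
    have hinf : (⨅ ρ : ℝ, G (max ρ α)) = A := by
      refine le_antisymm (le_iInf fun ⟨r, hr⟩ => ?_) (le_iInf fun r => ?_)
      · exact iInf_le_of_le r (by rw [max_eq_left hr])
      · exact iInf_le _ (⟨max r α, Set.mem_Ici.mpr (le_max_right r α)⟩ : Set.Ici α)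
    rw [hinf, hAL] at ht
    refine ht.congr' ?_
    filter_upwards [eventually_ge_atTop α] with r hr
    rw [max_eq_left hr]
  · exact ⟨π₀, hπ₀C, le_antisymm hFL (hLA.trans hAF)⟩
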